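/- Let $\mathbf{d} \sim \mathbf{d}'$ be neighbouring databases in $D^n$ (differing in exactly one coordinate), where $|D| = m+1$. For each $c \in \{0,\dots,n-1\}$, the number of databases $\mathbf{d}^* \in D^n$ satisfying both $h(\mathbf{d},\mathbf{d}^*) = c$ and $h(\mathbf{d}',\mathbf{d}^*) = c+1$ is exactly $\binom{n-1}{c} m^c$. -/

import Mathlib

open Finset

lemma fiber_card_aux {ι D : Type*} [Fintype ι] [DecidableEq ι] [Fintype D] [DecidableEq D]
    (m : ℕ) (hcard : Fintype.card D = m + 1) (d : ι → D) (s : Finset ι) :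
    (univ.filter fun x : ι → D => (univ.filter fun i => d i ≠ x i) = s).card = m ^ s.card := by
  have hset : (univ.filter fun x : ι → D => (univ.filter fun i => d i ≠ x i) = s)
      = Fintype.piFinset (fun i => if i ∈ s then univ.filter (· ≠ d i) else {d i}) := by
    ext x
    simp only [mem_filter, mem_univ, true_and, Fintype.mem_piFinset]
    constructor
    · intro h i
      by_cases hi : i ∈ s
      · have hd : d i ≠ x i := by
          have := hi; rw [← h] at this
          simpa using this
        simp only [hi, if_true, mem_filter, mem_univ, true_and]
        exact fun e => hd e.symm
      · have hd : d i = x i := by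
          have := hi; rw [← h] at this
          simpa using this
        simp [hi, hd.symm]
    · intro h
      ext i
      simp only [mem_filter, mem_univ, true_and]
      have := h i
      by_cases hi : i ∈ s <;> simp [hi] at this <;> simp [hi]
      · exact fun e => this e.symm
      · exact this.symm
  rw [hset, Fintype.card_piFinset]
  have : ∀ i : ι, (if i ∈ s then univ.filter (· ≠ d i) else ({d i} : Finset D)).card
      = if i ∈ s then m else 1 := by
    intro i
    by_cases hi : i ∈ s
    · simp only [hi, if_true]
      rw [Finset.filter_ne', Finset.card_erase_of_mem (mem_univ _), Finset.card_univ, hcard]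
      omega
    · simp [hi]
  simp_rw [this]
  rw [Finset.prod_ite_mem, Finset.univ_inter, Finset.prod_const]

theorem stmt_4 {D : Type*} [Fintype D] [DecidableEq D] (m n : ℕ) (hm : 1 ≤ m) (hn : 1 ≤ n)
    (hcard : Fintype.card D = m + 1) (d d' : Fin n → D) (hnb : hammingDist d d' = 1)
    (c : ℕ) (hc : c ≤ n - 1) :
    (Finset.univ.filter (fun x : Fin n → D =>
        hammingDist d x = c ∧ hammingDist d' x = c + 1)).card =
      (n - 1).choose c * m ^ c := by
  obtain ⟨i₀, hi⟩ : ∃ i₀, (univ.filter fun i => d i ≠ d' i) = {i₀} := by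
    apply card_eq_one.mp
    simpa [hammingDist] using hnb
  have hne : d i₀ ≠ d' i₀ := by
    have : i₀ ∈ (univ.filter fun i => d i ≠ d' i) := by rw [hi]; exact mem_singleton_self _
    simpa using this
  have heq : ∀ i, i ≠ i₀ → d i = d' i := by
    intro i hii
    by_contra h
    have : i ∈ (univ.filter fun i => d i ≠ d' i) := by simpa using h
    rw [hi, mem_singleton] at this
    exact hii this
  -- characterize the set
  have key : (univ.filter (fun x : Fin n → D =>
        hammingDist d x = c ∧ hammingDist d' x = c + 1))
      = (powersetCard c (univ.erase i₀)).biUnion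
          (fun s => univ.filter fun x => (univ.filter fun i => d i ≠ x i) = s) := by
    ext x
    simp only [mem_filter, mem_univ, true_and, mem_biUnion, mem_powersetCard]
    constructor
    · rintro ⟨h1, h2⟩
      refine ⟨_, ⟨?_, ?_⟩, rfl⟩
      · intro i hix
        simp only [mem_filter, mem_univ, true_and] at hix
        rw [mem_erase]
        refine ⟨?_, mem_univ _⟩
        rintro rfl
        -- d i₀ ≠ x i₀; show contradiction with h2
        have hsub : (univ.filter fun i => d' i ≠ x i) ⊆ (univ.filter fun i => d i ≠ x i) := by
          intro j hj
          simp only [mem_filter, mem_univ, true_and] at hj ⊢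
          by_cases hji : j = i
          · subst hji; exact hix
          · rwa [heq j hji]
        have := card_le_card hsub
        rw [show (univ.filter fun i => d' i ≠ x i).card = hammingDist d' x from rfl,
          show (univ.filter fun i => d i ≠ x i).card = hammingDist d x from rfl, h1, h2] at this
        omega
      · exact h1
    · rintro ⟨s, ⟨hs1, hs2⟩, hs3⟩
      have hi₀ : d i₀ = x i₀ := by
        by_contra h
        have : i₀ ∈ s := by
          rw [← hs3]; simpa using h
        exact absurd (mem_erase.mp (hs1 this)).1 (by simp)
      have h1 : hammingDist d x = c := by
        rw [show hammingDist d x = (univ.filter fun i => d i ≠ x i).card from rfl, hs3, hs2]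
      refine ⟨h1, ?_⟩
      have hB : (univ.filter fun i => d' i ≠ x i) = insert i₀ (univ.filter fun i => d i ≠ x i) := by
        ext j
        simp only [mem_filter, mem_univ, true_and, mem_insert]
        by_cases hji : j = i₀
        · subst hji
          have hd : d' j ≠ x j := fun e => hne (hi₀.trans e.symm)
          simp [hd]
        · rw [← heq j hji]
          simp [hji]
      rw [show hammingDist d' x = (univ.filter fun i => d' i ≠ x i).card from rfl, hB,
        card_insert_of_notMem (by simp [hi₀]), hs3, hs2]
  rw [key, card_biUnion]
  · have hterm : ∀ s ∈ powersetCard c (univ.erase i₀),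
        (univ.filter fun x : Fin n → D => (univ.filter fun i => d i ≠ x i) = s).card = m ^ c := by
      intro s hs
      rw [fiber_card_aux m hcard d s, (mem_powersetCard.mp hs).2]
    rw [Finset.sum_congr rfl hterm, Finset.sum_const, Finset.card_powersetCard,
      card_erase_of_mem (mem_univ _), card_univ, Fintype.card_fin, smul_eq_mul]
  · intro s hs t ht hst
    rw [Function.onFun, Finset.disjoint_left]
    intro x hx1 hx2
    simp only [mem_filter] at hx1 hx2
    exact hst (hx1.2.symm.trans hx2.2)
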